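/- Let N be a tree-child time consistent hybridization network, let i be a hybrid leaf, let v be a parent of i, and let s be a tree descendant leaf of v. Then v = [i,s], i.e., v is the least common semi-strict ancestor of i and s; in particular ℓ_N(i,s) = 1. -/

import Mathlib

open Classical

/-- A walk (path) in a digraph: a nonempty list of vertices with consecutive arcs. -/
def IsWalk {V : Type} (E : V → V → Prop) (p : List V) : Prop := p ≠ [] ∧ p.Chain' E

/-- A path with origin `u` and end `v`. -/
def WalkFromTo {V : Type} (E : V → V → Prop) (u v : V) (p : List V) : Prop :=
  IsWalk E p ∧ p.head? = some u ∧ p.getLast? = some v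

/-- `v` is a descendant of `u` (possibly trivial path from `u` to `v`). -/
def Desc {V : Type} (E : V → V → Prop) (u v : V) : Prop := Relation.ReflTransGen E u v

/-- A root: a node with no incoming arcs. -/
def IsRootNode {V : Type} (E : V → V → Prop) (r : V) : Prop := ∀ u, ¬ E u r

/-- `u` is a strict ancestor of `v`: `v` is a descendant of `u` and every path
from a root to `v` contains `u`. -/
def StrictAnc {V : Type} (E : V → V → Prop) (u v : V) : Prop :=
  Desc E u v ∧ ∀ (r : V) (p : List V), IsRootNode E r → WalkFromTo E r v p → u ∈ p

/-- In-degree. -/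
noncomputable def indeg {V : Type} (E : V → V → Prop) (v : V) : ℕ := {u | E u v}.ncard
/-- Out-degree. -/
noncomputable def outdeg {V : Type} (E : V → V → Prop) (v : V) : ℕ := {w | E v w}.ncard

/-- Tree node: in-degree at most 1. -/
def IsTreeNode {V : Type} (E : V → V → Prop) (v : V) : Prop := indeg E v ≤ 1
/-- Hybrid node: in-degree at least 2. -/
def IsHybrid {V : Type} (E : V → V → Prop) (v : V) : Prop := 2 ≤ indeg E v
/-- Leaf: no outgoing arcs. -/
def IsLeaf {V : Type} (E : V → V → Prop) (v : V) : Prop := ∀ w, ¬ E v w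

/-- Acyclicity: no non-trivial path from a node to itself. -/
def Acyclic {V : Type} (E : V → V → Prop) : Prop := ∀ v, ¬ Relation.TransGen E v v

/-- A hybridization network: a rooted DAG whose single root has out-degree > 1. -/
structure IsHybNet {V : Type} (E : V → V → Prop) (r : V) : Prop where
  acyclic : Acyclic E
  isRoot : IsRootNode E r
  uniqueRoot : ∀ x, IsRootNode E x → x = r
  rootOut : 2 ≤ outdeg E r

/-- Tree-child condition: every internal node has a tree-node child. -/
def TreeChild {V : Type} (E : V → V → Prop) : Prop :=
  ∀ v, ¬ IsLeaf E v → ∃ w, E v w ∧ IsTreeNode E w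

/-- Time consistency: a temporal representation exists. -/
def TimeConsistent {V : Type} (E : V → V → Prop) : Prop :=
  ∃ τ : V → ℕ, ∀ u v, E u v → (IsTreeNode E v → τ u < τ v) ∧ (IsHybrid E v → τ u = τ v)

/-- The leaves are bijectively labeled by `S` via `leaf`. -/
def LabelsLeaves {V S : Type} (E : V → V → Prop) (leaf : S → V) : Prop :=
  Function.Injective leaf ∧ (∀ s, IsLeaf E (leaf s)) ∧ ∀ v, IsLeaf E v → ∃ s, leaf s = v

/-- Distance: length of a shortest path from `u` to `v`. -/
noncomputable def dist {V : Type} (E : V → V → Prop) (u v : V) : ℕ :=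
  sInf {n | ∃ p, WalkFromTo E u v p ∧ p.length = n + 1}

/-- Height: largest length of a path from `v` to a leaf. -/
noncomputable def height {V : Type} (E : V → V → Prop) (v : V) : ℕ :=
  sSup {n | ∃ p w, WalkFromTo E v w p ∧ IsLeaf E w ∧ p.length = n + 1}

/-- Common ancestors of `u` and `v` that are strict ancestors of at least one of them. -/
def CSAset {V : Type} (E : V → V → Prop) (u v : V) : Set V :=
  {x | Desc E x u ∧ Desc E x v ∧ (StrictAnc E x u ∨ StrictAnc E x v)}

/-- `x` is a least common semi-strict ancestor of `u` and `v`. -/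
def IsLCSA {V : Type} (E : V → V → Prop) (u v x : V) : Prop :=
  x ∈ CSAset E u v ∧ ∀ y ∈ CSAset E u v, height E x ≤ height E y

/-- The least common semi-strict ancestor `[u,v]` (the root `r` witnesses nonemptiness). -/
noncomputable def lcsa {V : Type} (E : V → V → Prop) (r u v : V) : V :=
  @Classical.epsilon V ⟨r⟩ (IsLCSA E u v)

/-- `ℓ_N(u,v)`: the distance from `[u,v]` to `u`. -/
noncomputable def ell {V : Type} (E : V → V → Prop) (r u v : V) : ℕ :=
  dist E (lcsa E r u v) u

/-- `L_N(u,v) = ℓ_N(u,v) + ℓ_N(v,u)`: the LCSA-path length between `u` and `v`. -/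
noncomputable def pathLen {V : Type} (E : V → V → Prop) (r u v : V) : ℕ :=
  ell E r u v + ell E r v u

/-- `h_N(u,v)`: −1 if `[u,v]` is a strict ancestor of `u` only, 1 if of `v` only, 0 if of both. -/
noncomputable def hval {V : Type} (E : V → V → Prop) (r u v : V) : ℤ :=
  if StrictAnc E (lcsa E r u v) u then
    (if StrictAnc E (lcsa E r u v) v then 0 else -1)
  else 1

/-- Siblings: distinct nodes sharing a parent. -/
def Sibling {V : Type} (E : V → V → Prop) (u v : V) : Prop :=
  u ≠ v ∧ ∃ p, E p u ∧ E p v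

/-- A tree path: a non-trivial path whose end and intermediate nodes are tree nodes. -/
def TreePath {V : Type} (E : V → V → Prop) (p : List V) (u v : V) : Prop :=
  WalkFromTo E u v p ∧ 2 ≤ p.length ∧ ∀ w ∈ p.tail, IsTreeNode E w

/-- `v` is a tree descendant of `u`. -/
def TreeDesc {V : Type} (E : V → V → Prop) (u v : V) : Prop := ∃ p, TreePath E p u v

/-- Quasi-binary hybridization network. -/
def QuasiBinary {V : Type} (E : V → V → Prop) : Prop :=
  ∀ v : V, (indeg E v, outdeg E v) ∈ ({(0,2),(1,0),(1,2),(2,0),(2,1),(2,2)} : Set (ℕ × ℕ))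

/-- Fully resolved hybridization network node types. -/
def FullyResolvedHyb {V : Type} (E : V → V → Prop) : Prop :=
  ∀ v : V, (indeg E v, outdeg E v) ∈ ({(0,2),(1,0),(1,2),(2,0),(2,2)} : Set (ℕ × ℕ))

/-- Fully resolved phylogenetic network node types. -/
def FullyResolvedPhylo {V : Type} (E : V → V → Prop) : Prop :=
  ∀ v : V, (indeg E v, outdeg E v) ∈ ({(0,2),(1,0),(1,2),(2,1)} : Set (ℕ × ℕ))

/-- Phylogenetic network condition: every hybrid node has exactly one child, a tree node. -/
def PhyloNet {V : Type} (E : V → V → Prop) : Prop :=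
  ∀ v, IsHybrid E v → ∃ w, E v w ∧ IsTreeNode E w ∧ ∀ x, E v x → x = w


section Aux
variable {V : Type} {E : V → V → Prop}

theorem chain_transGen {a b : V} : ∀ {l : List V}, List.Chain E a l → b ∈ l →
    Relation.TransGen E a b := by
  intro l
  induction l generalizing a with
  | nil => intro _ h; simp at h
  | cons c t ih =>
    intro hc hb
    rw [List.Chain, List.chain_cons] at hc
    rcases List.mem_cons.mp hb with rfl | hb
    · exact Relation.TransGen.single hc.1
    · exact (Relation.TransGen.single hc.1).trans (ih hc.2 hb)

theorem chain_parent {a w : V} : ∀ {l : List V}, List.Chain E a l → w ∈ l →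
    ∃ z, (z = a ∨ z ∈ l) ∧ E z w := by
  intro l
  induction l generalizing a with
  | nil => intro _ h; simp at h
  | cons c t ih =>
    intro hc hw
    rw [List.Chain, List.chain_cons] at hc
    rcases List.mem_cons.mp hw with rfl | hw
    · exact ⟨a, Or.inl rfl, hc.1⟩
    · obtain ⟨z, hz, hze⟩ := ih hc.2 hw
      refine ⟨z, Or.inr ?_, hze⟩
      rcases hz with rfl | h
      · exact List.mem_cons_self
      · exact List.mem_cons_of_mem _ h

theorem chain_chain' {a : V} {l : List V} (h : List.Chain E a l) : l.Chain' E := by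
  cases l with
  | nil => exact List.IsChain.nil
  | cons b t => exact (List.chain_cons.mp h).2

theorem walk_nodup (hac : Acyclic E) : ∀ {p : List V}, p.Chain' E → p.Nodup := by
  intro p
  induction p with
  | nil => intro _; exact List.nodup_nil
  | cons a t ih =>
    intro hc
    have hct : List.Chain E a t := hc
    refine List.nodup_cons.mpr ⟨fun ha => ?_, ih (chain_chain' hct)⟩
    exact hac a (chain_transGen hct ha)

theorem mem_walk_desc' {u : V} : ∀ {p : List V}, p.Chain' E →
    p.getLast? = some u → ∀ y ∈ p, Desc E y u := by
  intro p
  induction p with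
  | nil => intro _ _ y hy; simp at hy
  | cons a t ih =>
    intro hc hl y hy
    cases t with
    | nil =>
      simp at hy hl
      subst hy; subst hl; exact Relation.ReflTransGen.refl
    | cons b t' =>
      have hct : List.Chain E a (b :: t') := hc
      rw [List.Chain, List.chain_cons] at hct
      have hl' : (b :: t').getLast? = some u := by
        rwa [List.getLast?_cons_cons] at hl
      have ih' := ih (show List.Chain' E (b::t') from hct.2) hl'
      rcases List.mem_cons.mp hy with rfl | hy
      · exact Relation.ReflTransGen.head hct.1 (ih' b (List.mem_cons_self))
      · exact ih' y hy

theorem mem_walk_desc {y u : V} {p : List V} (hc : p.Chain' E) (hy : y ∈ p)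
    (hl : p.getLast? = some u) : Desc E y u := mem_walk_desc' hc hl y hy

theorem walk_desc {u v : V} {p : List V} (hw : WalkFromTo E u v p) : Desc E u v := by
  obtain ⟨⟨hne, hc⟩, hh, hl⟩ := hw
  cases p with
  | nil => simp at hh
  | cons a t =>
    simp at hh; subst hh
    exact mem_walk_desc hc (List.mem_cons_self) hl

theorem desc_walk {u v : V} (h : Desc E u v) : ∃ p, WalkFromTo E u v p := by
  induction h with
  | refl => exact ⟨[u], ⟨by simp, List.IsChain.singleton u⟩, by simp, by simp⟩
  | tail _ hba ih =>
    obtain ⟨p, ⟨hne, hc⟩, hh, hl⟩ := ih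
    rename_i b c _
    refine ⟨p ++ [c], ⟨by simp, ?_⟩, ?_, ?_⟩
    · refine List.IsChain.append hc (by simp) ?_
      intro x hx y hy
      simp at hy; subst hy
      rw [hl] at hx; simp at hx; subst hx; exact hba
    · cases p with
      | nil => simp at hne
      | cons a t => simpa using hh
    · simp

theorem parent_unique {w u u' : V} [Fintype V] (h : indeg E w ≤ 1) (h1 : E u w) (h2 : E u' w) :
    u = u' := by
  have := (Set.ncard_le_one (Set.toFinite _)).mp h
  exact this u h1 u' h2

theorem tau_edge_mono [Fintype V] {τ : V → ℕ}
    (hτ : ∀ u v, E u v → (IsTreeNode E v → τ u < τ v) ∧ (IsHybrid E v → τ u = τ v))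
    {u v : V} (h : E u v) : τ u ≤ τ v := by
  by_cases ht : IsTreeNode E v
  · exact le_of_lt ((hτ u v h).1 ht)
  · have : IsHybrid E v := by
      unfold IsTreeNode at ht; unfold IsHybrid; omega
    exact le_of_eq ((hτ u v h).2 this)

theorem tau_desc_mono [Fintype V] {τ : V → ℕ}
    (hτ : ∀ u v, E u v → (IsTreeNode E v → τ u < τ v) ∧ (IsHybrid E v → τ u = τ v))
    {u v : V} (h : Desc E u v) : τ u ≤ τ v := by
  induction h with
  | refl => exact le_rfl
  | tail _ h2 ih => exact le_trans ih (tau_edge_mono hτ h2)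

theorem tau_chain_strict {τ : V → ℕ}
    (hτ : ∀ u v, E u v → (IsTreeNode E v → τ u < τ v))
    {a b : V} : ∀ {l : List V}, List.Chain E a l → (∀ w ∈ l, IsTreeNode E w) → b ∈ l →
      τ a < τ b := by
  intro l
  induction l generalizing a with
  | nil => intro _ _ h; simp at h
  | cons c t ih =>
    intro hc htree hb
    rw [List.Chain, List.chain_cons] at hc
    have hac : τ a < τ c := hτ a c hc.1 (htree c (List.mem_cons_self))
    rcases List.mem_cons.mp hb with rfl | hb
    · exact hac
    · exact lt_trans hac (ih hc.2 (fun w hw => htree w (List.mem_cons_of_mem _ hw)) hb)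

end Aux
section Aux2
variable {V : Type} {E : V → V → Prop}

/-- In a finite acyclic digraph, `E` is well-founded. -/
theorem acyclic_wf [Fintype V] (hac : Acyclic E) : WellFounded E := by
  have hirr : IsIrrefl V (Relation.TransGen E) := ⟨fun a h => hac a h⟩
  have htr : IsTrans V (Relation.TransGen E) := ⟨fun _ _ _ => Relation.TransGen.trans⟩
  have hwf : WellFounded (Relation.TransGen E) :=
    Finite.wellFounded_of_trans_of_irrefl _
  exact Subrelation.wf (fun h => Relation.TransGen.single h) hwf

/-- The root reaches every node. -/
theorem root_desc [Fintype V] {r : V} (hnet : IsHybNet E r) (x : V) : Desc E r x := by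
  induction x using WellFounded.induction (acyclic_wf hnet.acyclic) with
  | _ x ih =>
    by_cases hx : ∃ u, E u x
    · obtain ⟨u, hu⟩ := hx
      exact (ih u hu).tail hu
    · push_neg at hx
      have : x = r := hnet.uniqueRoot x hx
      subst this
      exact Relation.ReflTransGen.refl

/-- If `w` has a unique parent `u` (tree node) then every walk from a root
containing `w` also contains `u`. -/
theorem parent_mem_walk [Fintype V] {r x u w : V} {p : List V} (hr : IsRootNode E r)
    (hp : WalkFromTo E r x p) (hw : w ∈ p) (huw : E u w) (htw : IsTreeNode E w) :
    u ∈ p := by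
  obtain ⟨⟨hne, hc⟩, hh, _⟩ := hp
  cases p with
  | nil => simp at hne
  | cons a t =>
    simp at hh; subst hh
    have hct : List.Chain E a t := hc
    rcases List.mem_cons.mp hw with rfl | hw
    · exact absurd huw (hr u)
    · obtain ⟨z, hz, hzw⟩ := chain_parent hct hw
      have : z = u := parent_unique htw hzw huw
      subst this
      rcases hz with rfl | hz
      · exact List.mem_cons_self
      · exact List.mem_cons_of_mem _ hz

/-- If there is a walk from `u` to `s` all of whose non-initial nodes are tree
nodes, then every walk from a root to `s` contains `u`. -/
theorem treewalk_mem [Fintype V] {s : V} : ∀ {q : List V} {u : V},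
    WalkFromTo E u s q → (∀ w ∈ q.tail, IsTreeNode E w) →
    ∀ {r : V} {p : List V}, IsRootNode E r → WalkFromTo E r s p → u ∈ p := by
  intro q
  induction q with
  | nil => intro u hq _ _ _ _ _; exact absurd rfl hq.1.1
  | cons a t ih =>
    intro u hq htree r p hr hp
    obtain ⟨⟨_, hc⟩, hh, hl⟩ := hq
    simp at hh; subst hh
    cases t with
    | nil =>
      simp at hl; subst hl
      obtain ⟨⟨hne, _⟩, _, hl'⟩ := hp
      exact List.mem_of_mem_getLast? (by rw [hl']; simp)
    | cons b t' =>
      have hct : List.Chain E a (b :: t') := hc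
      rw [List.Chain, List.chain_cons] at hct
      have hwalk : WalkFromTo E b s (b :: t') :=
        ⟨⟨by simp, show List.Chain' E (b :: t') from hct.2⟩, by simp,
          by rwa [List.getLast?_cons_cons] at hl⟩
      have htree' : ∀ w ∈ (b :: t').tail, IsTreeNode E w := by
        intro w hw; exact htree w (List.mem_cons_of_mem _ hw)
      have hb : b ∈ p := ih hwalk htree' hr hp
      exact parent_mem_walk hr hp hb hct.1 (htree b (by simp))

end Aux2
section Aux3
variable {V : Type} {E : V → V → Prop}

theorem heightSet_bdd [Fintype V] (hac : Acyclic E) (x : V) :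
    BddAbove {n | ∃ p w, WalkFromTo E x w p ∧ IsLeaf E w ∧ p.length = n + 1} := by
  refine ⟨Fintype.card V, fun n hn => ?_⟩
  obtain ⟨p, w, hw, _, hlen⟩ := hn
  have hnd : p.Nodup := walk_nodup hac hw.1.2
  have := hnd.length_le_card
  omega

theorem height_edge [Fintype V] (hac : Acyclic E) {y x : V} (h : E y x) :
    height E x ≤ height E y := by
  unfold height
  rcases Set.eq_empty_or_nonempty
      {n | ∃ p w, WalkFromTo E x w p ∧ IsLeaf E w ∧ p.length = n + 1} with he | hne
  · rw [he, csSup_empty]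
    exact Nat.zero_le _
  · refine csSup_le hne fun n hn => ?_
    obtain ⟨p, w, ⟨⟨hpne, hc⟩, hh, hl⟩, hleaf, hlen⟩ := hn
    cases p with
    | nil => simp at hpne
    | cons a t =>
      simp at hh; subst hh
      have hwalk : WalkFromTo E y w (y :: a :: t) := by
        refine ⟨⟨by simp, List.isChain_cons_cons.mpr ⟨h, hc⟩⟩, by simp, ?_⟩
        rwa [List.getLast?_cons_cons]
      have hmem : n + 1 ∈ {n | ∃ p w, WalkFromTo E y w p ∧ IsLeaf E w ∧ p.length = n + 1} :=
        ⟨y :: a :: t, w, hwalk, hleaf, by simp at hlen ⊢; omega⟩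
      have := le_csSup (heightSet_bdd hac y) hmem
      omega

theorem height_mono [Fintype V] (hac : Acyclic E) {y x : V} (h : Desc E y x) :
    height E x ≤ height E y := by
  induction h with
  | refl => exact le_rfl
  | tail _ h2 ih => exact le_trans (height_edge hac h2) ih

theorem walk_concat {a b c : V} {p q : List V} (hp : WalkFromTo E a b p)
    (hq : WalkFromTo E b c q) : WalkFromTo E a c (p ++ q.tail) := by
  obtain ⟨⟨hpne, hpc⟩, hph, hpl⟩ := hp
  obtain ⟨⟨hqne, hqc⟩, hqh, hql⟩ := hq
  cases q with
  | nil => simp at hqne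
  | cons b' t =>
    simp at hqh; subst hqh
    cases t with
    | nil =>
      simp at hql; subst hql
      simpa using ⟨⟨hpne, hpc⟩, hph, hpl⟩
    | cons d t' =>
      have hqc' : List.Chain E b' (d :: t') := hqc
      rw [List.Chain, List.chain_cons] at hqc'
      refine ⟨⟨by simp [hpne], ?_⟩, ?_, ?_⟩
      · refine List.IsChain.append hpc (show List.Chain' E (d :: t') from hqc'.2) ?_
        intro x hx z hz
        rw [hpl] at hx; simp at hx hz
        subst hx; subst hz; exact hqc'.1
      · cases p with
        | nil => simp at hpne
        | cons e pt => simpa using hph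
      · show (p ++ d :: t').getLast? = some c
        rw [List.getLast?_append_cons]
        rwa [List.getLast?_cons_cons] at hql

theorem leaf_desc {x y : V} (hx : IsLeaf E x) (h : Desc E x y) : y = x := by
  rcases Relation.ReflTransGen.cases_head h with rfl | ⟨c, hc, _⟩
  · rfl
  · exact absurd hc (hx c)

end Aux3

/-- In a TCTC hybridization network, if `i` is a hybrid leaf, `v` a parent
of `i`, and `s` a tree descendant leaf of `v`, then `v = [i,s]` and `ℓ_N(i,s) = 1`. -/
theorem stmt19 {V : Type} [Fintype V] (E : V → V → Prop) (r : V)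
    (hnet : IsHybNet E r) (htc : TreeChild E) (hti : TimeConsistent E)
    (i v s : V) (hi : IsLeaf E i) (hhyb : IsHybrid E i) (hvi : E v i)
    (hs : IsLeaf E s) (hts : TreeDesc E v s) :
    IsLCSA E i s v ∧ dist E v i = 1 := by
  obtain ⟨q, hqw, hqlen, hqtree⟩ := hts
  obtain ⟨τ, hτ⟩ := hti
  have hvne : v ≠ i := by
    rintro rfl
    exact hnet.acyclic v (Relation.TransGen.single hvi)
  -- decompose the tree path
  obtain ⟨⟨hqne, hqc⟩, hqh, hql⟩ := hqw
  obtain ⟨t, rfl⟩ : ∃ t, q = v :: t := by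
    cases q with
    | nil => exact absurd rfl hqne
    | cons a b =>
      have ha : a = v := by simpa using hqh
      exact ⟨b, by rw [ha]⟩
  have hct : List.Chain E v t := hqc
  have httree : ∀ w ∈ t, IsTreeNode E w := hqtree
  -- s is in t
  have hst : s ∈ t := by
    cases t with
    | nil => simp at hqlen
    | cons d t' =>
      rw [List.getLast?_cons_cons] at hql
      exact List.mem_of_mem_getLast? (by rw [hql]; simp)
  have hstree : IsTreeNode E s := httree s hst
  -- basic descents
  have hvs : Desc E v s := mem_walk_desc (p := v :: t) hqc (List.mem_cons_self) hql
  have hvi' : Desc E v i := Relation.ReflTransGen.single hvi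
  have hqwalk : WalkFromTo E v s (v :: t) := ⟨⟨hqne, hqc⟩, by simp, hql⟩
  have hStrict : StrictAnc E v s :=
    ⟨hvs, fun r' p hr' hp => treewalk_mem hqwalk hqtree hr' hp⟩
  have hCSA : v ∈ CSAset E i s := ⟨hvi', hvs, Or.inr hStrict⟩
  -- time consistency facts
  have hτvi : τ v = τ i := (hτ v i hvi).2 hhyb
  -- no CSA member can lie in the interior/end of the tree path
  have hnotint : ∀ y, Desc E y i → y ∉ t := by
    intro y hyi hyt
    have hτvy : τ v < τ y :=
      tau_chain_strict (fun u w h ht => (hτ u w h).1 ht) hct httree hyt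
    rcases Relation.ReflTransGen.cases_tail hyi with rfl | ⟨u, hyu, hui⟩
    · omega
    · have h1 : τ y ≤ τ u := tau_desc_mono hτ hyu
      have h2 : τ u = τ i := (hτ u i hui).2 hhyb
      omega
  -- root walk to v
  obtain ⟨p₀, hp₀⟩ := desc_walk (root_desc hnet v)
  have hp₀c := hp₀.1.2
  have hp₀l := hp₀.2.2
  -- every CSA member is an ancestor of v
  have hanc : ∀ y ∈ CSAset E i s, Desc E y v := by
    rintro y ⟨hyi, hys, hcase⟩
    have hyne : y ≠ i := by
      rintro rfl
      have : s = y := leaf_desc hi hys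
      exact hnotint y hyi (this ▸ hst)
    rcases hcase with hsa | hsa
    · -- strict ancestor of i : use the walk p₀ ++ [i]
      have hwalk : WalkFromTo E r i (p₀ ++ [i]) := by
        refine ⟨⟨by simp, ?_⟩, ?_, by simp⟩
        · refine List.IsChain.append hp₀c (by simp) ?_
          intro x hx z hz
          rw [hp₀l] at hx; simp at hx hz; subst hx; subst hz; exact hvi
        · obtain ⟨⟨hne, _⟩, hh, _⟩ := hp₀
          cases p₀ with
          | nil => simp at hne
          | cons e pt => simpa using hh
      have hy : y ∈ p₀ ++ [i] := hsa.2 r _ hnet.isRoot hwalk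
      rcases List.mem_append.mp hy with hy | hy
      · exact mem_walk_desc hp₀c hy hp₀l
      · simp at hy; exact absurd hy hyne
    · -- strict ancestor of s : use the walk p₀ ++ t
      have hwalk : WalkFromTo E r s (p₀ ++ t) := walk_concat hp₀ hqwalk
      have hy : y ∈ p₀ ++ t := hsa.2 r _ hnet.isRoot hwalk
      rcases List.mem_append.mp hy with hy | hy
      · exact mem_walk_desc hp₀c hy hp₀l
      · exact absurd hy (hnotint y hyi)
  constructor
  · exact ⟨hCSA, fun y hy => height_mono hnet.acyclic (hanc y hy)⟩
  · -- dist E v i = 1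
    show sInf {n | ∃ p, WalkFromTo E v i p ∧ p.length = n + 1} = 1
    have h1 : 1 ∈ {n | ∃ p, WalkFromTo E v i p ∧ p.length = n + 1} := by
      refine ⟨[v, i], ⟨⟨by simp, ?_⟩, by simp, by simp⟩, by simp⟩
      exact List.isChain_cons_cons.mpr ⟨hvi, by simp⟩
    have h0 : 0 ∉ {n | ∃ p, WalkFromTo E v i p ∧ p.length = n + 1} := by
      rintro ⟨p, ⟨⟨hne, _⟩, hh, hl⟩, hlen⟩
      cases p with
      | nil => simp at hne
      | cons a t =>
        cases t with
        | nil =>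
          simp at hh hl
          subst hh; subst hl; exact hvne rfl
        | cons b t' => simp at hlen
    have hle : sInf {n | ∃ p, WalkFromTo E v i p ∧ p.length = n + 1} ≤ 1 :=
      Nat.sInf_le h1
    have hne0 : sInf {n | ∃ p, WalkFromTo E v i p ∧ p.length = n + 1} ≠ 0 := by
      intro h
      rcases Nat.sInf_eq_zero.mp h with h' | h'
      · exact h0 h'
      · rw [h'] at h1; exact h1
    omega
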